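/- Let E be a real inner product space, X ⊆ E a nonempty convex set, and d : E → ℝ a convex Fréchet-differentiable function with Bregman divergence V(y,x) := d(y) − d(x) − ⟨∇d(x), y − x⟩. Let p ∈ E, z₀, w ∈ E, t ≥ 0, and suppose z⁺ ∈ X minimizes the function z ↦ ⟨p, z⟩ + V(z, z₀) + t·V(z, w) over X. Then for every u ∈ X: ⟨p, z⁺ − u⟩ ≤ V(u, z₀) − V(u, z⁺) − V(z⁺, z₀) + t·( V(u, w) − V(u, z⁺) − V(z⁺, w) ). -/

import Mathlib

open scoped RealInnerProductSpace

open Set Filter Topology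

/-- If `g` has derivative `c` at `0` and `g 0 ≤ g s` for all `s ∈ Ioc 0 1`,
then `0 ≤ c`. -/
lemma deriv_nonneg_of_min_right {g : ℝ → ℝ} {c : ℝ}
    (hg : HasDerivAt g c 0) (hmin : ∀ s ∈ Set.Ioc (0:ℝ) 1, g 0 ≤ g s) : 0 ≤ c := by
  have h : HasDerivWithinAt g c (Set.Ioi (0:ℝ)) 0 := hg.hasDerivWithinAt
  have hslope := hasDerivWithinAt_iff_tendsto_slope.1 h
  rw [Set.diff_singleton_eq_self (by simp : (0:ℝ) ∉ Set.Ioi (0:ℝ))] at hslope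
  refine ge_of_tendsto hslope ?_
  have hmem : Set.Ioc (0:ℝ) 1 ∈ 𝓝[Set.Ioi (0:ℝ)] 0 :=
    Ioc_mem_nhdsGT one_pos
  filter_upwards [hmem] with s hs
  have hs0 : 0 < s := hs.1
  have hgs : 0 ≤ g s - g 0 := by linarith [hmin s hs]
  rw [slope_def_field]
  exact div_nonneg hgs (by linarith)

/-- Composite three-point inequality for the prox step (optimality property of
`w_k` and `z_{k+1}` in Algorithms 3, 4, 5). -/
theorem bregman_three_point_inequality
    {E : Type*} [NormedAddCommGroup E] [InnerProductSpace ℝ E] [CompleteSpace E]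
    (X : Set E) (hXne : X.Nonempty) (hXconv : Convex ℝ X)
    (d : E → ℝ) (hdconv : ConvexOn ℝ Set.univ d)
    (Dd : E → E) (hd : ∀ x, HasGradientAt d (Dd x) x)
    (V : E → E → ℝ) (hV : ∀ y x, V y x = d y - d x - ⟪Dd x, y - x⟫)
    (p z₀ w : E) (t : ℝ) (ht : 0 ≤ t)
    (zp : E) (hzpX : zp ∈ X)
    (hmin : ∀ z ∈ X, ⟪p, zp⟫ + V zp z₀ + t * V zp w ≤ ⟪p, z⟫ + V z z₀ + t * V z w) :
    ∀ u ∈ X,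
      ⟪p, zp - u⟫ ≤ V u z₀ - V u zp - V zp z₀ + t * (V u w - V u zp - V zp w) := by
  intro u huX
  set v : E := u - zp with hv
  -- the line s ↦ zp + s • v
  set L : ℝ → E := fun s => zp + s • v with hLdef
  have hL0 : L 0 = zp := by simp [hLdef]
  have hLX : ∀ s ∈ Set.Ioc (0:ℝ) 1, L s ∈ X := by
    intro s hs
    have : L s = (1 - s) • zp + s • u := by
      simp only [hLdef, hv, smul_sub, sub_smul, one_smul]
      abel
    rw [this]
    exact hXconv hzpX huX (by linarith [hs.2]) hs.1.le (by ring)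
  have hLder : HasDerivAt L v 0 := by
    have h1 : HasDerivAt (fun s : ℝ => s • v) ((1:ℝ) • v) 0 :=
      (hasDerivAt_id (0:ℝ)).smul_const v
    have h2 := h1.const_add zp
    rw [one_smul] at h2
    exact h2
  -- derivative of d ∘ L at 0
  have hdL : HasDerivAt (fun s => d (L s)) ⟪Dd zp, v⟫ 0 := by
    have hF : HasFDerivAt d (InnerProductSpace.toDual ℝ E (Dd zp)) (L 0) := by
      rw [hL0]; exact (hd zp).hasFDerivAt
    have h := hF.comp_hasDerivAt 0 hLder
    simp at h
    exact h
  -- derivative of s ↦ ⟪a, L s⟫ at 0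
  have hinner : ∀ a : E, HasDerivAt (fun s => ⟪a, L s⟫) ⟪a, v⟫ 0 := by
    intro a
    have hF : HasFDerivAt (fun x => ⟪a, x⟫) (innerSL ℝ a) (L 0) := (innerSL ℝ a).hasFDerivAt
    have h := hF.comp_hasDerivAt 0 hLder
    simp at h
    exact h
  -- the objective along the line
  set g : ℝ → ℝ := fun s => ⟪p, L s⟫ + V (L s) z₀ + t * V (L s) w with hgdef
  set c : ℝ := ⟪p, v⟫ + (⟪Dd zp, v⟫ - ⟪Dd z₀, v⟫) + t * (⟪Dd zp, v⟫ - ⟪Dd w, v⟫) with hc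
  have hg : HasDerivAt g c 0 := by
    have hgeq : g = fun s => ⟪p, L s⟫ + (d (L s) - d z₀ - (⟪Dd z₀, L s⟫ - ⟪Dd z₀, z₀⟫))
        + t * (d (L s) - d w - (⟪Dd w, L s⟫ - ⟪Dd w, w⟫)) := by
      funext s
      simp only [hgdef, hV, inner_sub_right]
    rw [hgeq]
    have h1 := ((hdL.sub_const (d z₀)).sub ((hinner (Dd z₀)).sub_const ⟪Dd z₀, z₀⟫))
    have h2 := ((hdL.sub_const (d w)).sub ((hinner (Dd w)).sub_const ⟪Dd w, w⟫)).const_mul t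
    exact ((hinner p).add h1).add h2
  have hcpos : 0 ≤ c := by
    refine deriv_nonneg_of_min_right hg ?_
    intro s hs
    have := hmin (L s) (hLX s hs)
    simpa [hgdef, hL0] using this
  -- conclude by the three-point identity
  have key : V u z₀ - V u zp - V zp z₀ + t * (V u w - V u zp - V zp w) - ⟪p, zp - u⟫ = c := by
    simp only [hc, hv, hV, inner_sub_left, inner_sub_right]
    ring
  linarith
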